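/- In the adjustment SCM, for every a ∈ 𝒜 such that μ(L = l, A = a) > 0 for all l ∈ ℒ, the interventional mean is identified by covariate adjustment: E[Yᵃ] = Σ_{l ∈ ℒ} μ(L = l) · E[Y | L = l, A = a]. -/

import Mathlib

open MeasureTheory ProbabilityTheory

/-- Conditional expectation of `X` given the event `E`: `μ(E)⁻¹ * ∫_E X dμ`. -/
noncomputable def cexp {Ω : Type*} [MeasurableSpace Ω] (μ : Measure Ω) (X : Ω → ℝ) (E : Set Ω) : ℝ :=
  ((μ E).toReal)⁻¹ * ∫ ω in E, X ω ∂μ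

/-- **Back-door adjustment identity.** In the adjustment SCM with `A := h(L, U_A)`,
`Y := k(L, A, U_Y)` and `U_A ⫫ (L, U_Y)`, for every `a` with positivity the interventional
mean `E[Yᵃ]` is identified by covariate adjustment over `L`. -/
theorem adjustment_scm_backdoor
    {Ω ℒ 𝒜 𝒰A 𝒰Y : Type*}
    [MeasurableSpace Ω]
    [Fintype ℒ] [Nonempty ℒ] [MeasurableSpace ℒ] [MeasurableSingletonClass ℒ]
    [Fintype 𝒜] [Nonempty 𝒜] [MeasurableSpace 𝒜] [MeasurableSingletonClass 𝒜]
    [MeasurableSpace 𝒰A] [MeasurableSpace 𝒰Y]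
    (μ : Measure Ω) [IsProbabilityMeasure μ]
    (L : Ω → ℒ) (UA : Ω → 𝒰A) (UY : Ω → 𝒰Y)
    (hL : Measurable L) (hUA : Measurable UA) (hUY : Measurable UY)
    (hIndep : IndepFun UA (fun ω => (L ω, UY ω)) μ)
    (h : ℒ × 𝒰A → 𝒜) (hh : Measurable h)
    (k : ℒ × 𝒜 × 𝒰Y → ℝ) (hk : Measurable k)
    (A : Ω → 𝒜) (Y : Ω → ℝ)
    (hA : ∀ ω, A ω = h (L ω, UA ω))
    (hY : ∀ ω, Y ω = k (L ω, A ω, UY ω))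
    (Ypo : 𝒜 → Ω → ℝ)
    (hYpo : ∀ (a : 𝒜) (ω : Ω), Ypo a ω = k (L ω, a, UY ω))
    (hIntY : Integrable Y μ)
    (hIntYpo : ∀ a : 𝒜, Integrable (Ypo a) μ) :
    ∀ a : 𝒜, (∀ l : ℒ, 0 < μ {ω | L ω = l ∧ A ω = a}) →
      ∫ ω, Ypo a ω ∂μ
        = ∑ l : ℒ, (μ {ω | L ω = l}).toReal * cexp μ Y {ω | L ω = l ∧ A ω = a} := by
  intro a hpos
  -- measurability of A, Y, Ypo
  have hAmeas : Measurable A := by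
    have : Measurable fun ω => h (L ω, UA ω) := hh.comp (hL.prodMk hUA)
    simpa [funext hA] using this
  have hYpoMeas : Measurable (Ypo a) := by
    have : Measurable fun ω => k (L ω, a, UY ω) :=
      hk.comp (hL.prodMk (measurable_const.prodMk hUY))
    simpa [funext (hYpo a)] using this
  -- step 1: decompose the integral of Ypo a over the partition {L = l}
  have hpart : ∫ ω, Ypo a ω ∂μ = ∑ l : ℒ, ∫ ω in L ⁻¹' {l}, Ypo a ω ∂μ := by
    have hcover : (⋃ l : ℒ, L ⁻¹' {l}) = Set.univ := by
      ext ω; simp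
    rw [← setIntegral_univ, ← hcover]
    exact integral_iUnion_fintype (fun l => hL (measurableSet_singleton l))
      (fun l l' hll' => Set.disjoint_left.2 fun ω hω hω' => hll' (hω.symm.trans hω'))
      (fun l => (hIntYpo a).integrableOn
        )
  rw [hpart]
  refine Finset.sum_congr rfl fun l _ => ?_
  -- key sets
  set B : Set 𝒰A := (fun u => h (l, u)) ⁻¹' {a} with hB
  have hBmeas : MeasurableSet B := (hh.comp (measurable_const.prodMk measurable_id))
    (measurableSet_singleton a)
  have hSeq : {ω | L ω = l ∧ A ω = a} = UA ⁻¹' B ∩ L ⁻¹' {l} := by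
    ext ω
    simp only [Set.mem_setOf_eq, Set.mem_inter_iff, Set.mem_preimage, Set.mem_singleton_iff, hB,
      hA ω]
    constructor
    · rintro ⟨h1, h2⟩; rw [h1] at h2 ⊢; exact ⟨h2, rfl⟩
    · rintro ⟨h2, h1⟩; rw [h1]; exact ⟨rfl, h2⟩
  have hLmeas : MeasurableSet (L ⁻¹' {l}) := hL (measurableSet_singleton l)
  -- measure factorization
  have hmeasfac : μ (UA ⁻¹' B ∩ L ⁻¹' {l})
      = μ (UA ⁻¹' B) * μ (L ⁻¹' {l}) := by
    have hTeq : L ⁻¹' {l} = (fun ω => (L ω, UY ω)) ⁻¹' ((Prod.fst) ⁻¹' {l}) := rfl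
    rw [hTeq, hIndep.measure_inter_preimage_eq_mul B _ hBmeas
      (measurable_fst (measurableSet_singleton l))]
  -- integral factorization via independence
  set F : Ω → ℝ := fun ω => (B.indicator (fun _ => (1:ℝ))) (UA ω) with hF
  set C : Set (ℒ × 𝒰Y) := Prod.fst ⁻¹' {l} with hC
  have hCmeas : MeasurableSet C := measurable_fst (measurableSet_singleton l)
  set g : ℒ × 𝒰Y → ℝ := C.indicator (fun p => k (p.1, a, p.2)) with hg
  set G : Ω → ℝ := fun ω => g (L ω, UY ω) with hG
  have hgmeas : Measurable g :=
    ((hk.comp ((measurable_fst).prodMk ((measurable_const).prodMk measurable_snd)))).indicator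
      hCmeas
  have hFmeas : Measurable F :=
    ((measurable_const.indicator hBmeas)).comp hUA
  have hGmeas : Measurable G := hgmeas.comp (hL.prodMk hUY)
  have hIndFG : IndepFun F G μ :=
    hIndep.comp (measurable_const.indicator hBmeas) hgmeas
  have hmul : ∫ ω, F ω * G ω ∂μ = (∫ ω, F ω ∂μ) * ∫ ω, G ω ∂μ :=
    hIndFG.integral_fun_mul_eq_mul_integral hFmeas.aestronglyMeasurable hGmeas.aestronglyMeasurable
  -- identify the three integrals
  have hFint : ∫ ω, F ω ∂μ = (μ (UA ⁻¹' B)).toReal := by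
    have : F = (UA ⁻¹' B).indicator (fun _ => (1:ℝ)) := by
      ext ω
      simp only [hF, Set.indicator]
      by_cases hω : UA ω ∈ B <;> simp [hω]
    rw [this]
    simpa [measureReal_def, Pi.one_def] using integral_indicator_one (hUA hBmeas)
  have hGrepr : G = (L ⁻¹' {l}).indicator (Ypo a) := by
    ext ω
    simp only [hG, hg, Set.indicator, hC, Set.mem_preimage, Set.mem_singleton_iff]
    by_cases hω : L ω = l
    · simp [hω, hYpo a ω]
    · simp [hω]
  have hGint : ∫ ω, G ω ∂μ = ∫ ω in L ⁻¹' {l}, Ypo a ω ∂μ := by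
    rw [hGrepr, integral_indicator hLmeas]
  have hFGrepr : (fun ω => F ω * G ω) = (UA ⁻¹' B ∩ L ⁻¹' {l}).indicator (Ypo a) := by
    ext ω
    simp only [hF, hG, hg, Set.indicator, hC, Set.mem_preimage, Set.mem_singleton_iff,
      Set.mem_inter_iff]
    by_cases h1 : UA ω ∈ B <;> by_cases h2 : L ω = l <;>
      simp [h1, h2, hYpo a ω]
  have hFGint : ∫ ω, F ω * G ω ∂μ = ∫ ω in UA ⁻¹' B ∩ L ⁻¹' {l}, Ypo a ω ∂μ := by
    rw [hFGrepr, integral_indicator ((hUA hBmeas).inter hLmeas)]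
  -- Y = Ypo a on the event
  have hYeq : ∫ ω in {ω | L ω = l ∧ A ω = a}, Y ω ∂μ
      = ∫ ω in UA ⁻¹' B ∩ L ⁻¹' {l}, Ypo a ω ∂μ := by
    rw [hSeq]
    refine setIntegral_congr_fun ((hUA hBmeas).inter hLmeas) fun ω hω => ?_
    obtain ⟨h1, h2⟩ := hω
    have hAa : A ω = a := by
      rw [hA ω, show L ω = l from h2]; exact h1
    rw [hY ω, hYpo a ω, hAa]
  -- positivity
  have hposl := hpos l
  rw [hSeq, hmeasfac] at hposl
  have hBpos : 0 < μ (UA ⁻¹' B) := by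
    by_contra hc
    push_neg at hc
    simp [le_antisymm hc bot_le] at hposl
  have hLpos : 0 < μ (L ⁻¹' {l}) := by
    by_contra hc
    push_neg at hc
    simp [le_antisymm hc bot_le] at hposl
  have hBfin : μ (UA ⁻¹' B) ≠ ⊤ := measure_ne_top μ _
  have hLfin : μ (L ⁻¹' {l}) ≠ ⊤ := measure_ne_top μ _
  have hBr : 0 < (μ (UA ⁻¹' B)).toReal := ENNReal.toReal_pos hBpos.ne' hBfin
  have hLr : 0 < (μ (L ⁻¹' {l})).toReal := ENNReal.toReal_pos hLpos.ne' hLfin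
  -- put it together
  have hLset : {ω | L ω = l} = L ⁻¹' {l} := rfl
  rw [cexp, hYeq, hSeq, hmeasfac, ENNReal.toReal_mul, hLset]
  have hkey : ∫ ω in UA ⁻¹' B ∩ L ⁻¹' {l}, Ypo a ω ∂μ
      = (μ (UA ⁻¹' B)).toReal * ∫ ω in L ⁻¹' {l}, Ypo a ω ∂μ := by
    rw [← hFGint, hmul, hFint, hGint]
  rw [hkey]
  field_simp
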